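/- Let (X_j)_{j≥1} be a ν-ergodic sequence (in the extended sense, so that the strong law of large numbers holds almost surely for every nonnegative measurable function, with limits taken in [0,∞]). Let (f_m)_{m≥1}, f and g be measurable real-valued functions on E such that f_m converges pointwise to f, g is nonnegative with ∫ g dν < ∞, f_m ≤ g for every m ≥ 1, and ∫ f₋ dν = +∞ where f₋ denotes the negative part of f. Then almost surely (1/m)·Σ_{j=1}^m f_m(X_j) → −∞ as m → ∞. -/

import Mathlib

open MeasureTheory Filter

/-- If `(X j)` is `ν`-ergodic in the extended sense, `(f m)` are
measurable real functions converging pointwise to `flim`, `g` is nonnegative and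
integrable, `f m ≤ g` for all `m`, and the negative part of `flim` has infinite
integral, then almost surely `(1/m) ∑_{j<m} f m (X j) → -∞`. -/
theorem stmt2
    {E : Type*} [MeasurableSpace E] (ν : Measure E) [IsProbabilityMeasure ν]
    {Ω : Type*} [MeasurableSpace Ω] (P : Measure Ω) [IsProbabilityMeasure P]
    (X : ℕ → Ω → E)
    (hX : ∀ φ : E → ENNReal, Measurable φ →
      ∀ᵐ ω ∂P, Tendsto (fun m => (∑ j ∈ Finset.range m, φ (X j ω)) / (m : ENNReal))
        atTop (nhds (∫⁻ x, φ x ∂ν)))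
    (f : ℕ → E → ℝ) (flim g : E → ℝ)
    (hfmeas : ∀ m, Measurable (f m))
    (hflimmeas : Measurable flim)
    (hgmeas : Measurable g)
    (hlim : ∀ x, Tendsto (fun m => f m x) atTop (nhds (flim x)))
    (hgnn : ∀ x, 0 ≤ g x)
    (hgint : Integrable g ν)
    (hdom : ∀ m x, f m x ≤ g x)
    (hneg : ∫⁻ x, ENNReal.ofReal (-(flim x)) ∂ν = ⊤) :
    ∀ᵐ ω ∂P, Tendsto
      (fun (m : ℕ) => (m : ℝ)⁻¹ * ∑ j ∈ Finset.range m, f m (X j ω))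
      atTop atBot := by
  classical
  set A : E → ENNReal := fun x => ENNReal.ofReal (g x) with hAdef
  have hAmeas : Measurable A := hgmeas.ennreal_ofReal
  set χ : ℕ → E → ENNReal := fun N x => ⨅ j, ENNReal.ofReal (g x - f (N + j) x) with hχdef
  have hχmeas : ∀ N, Measurable (χ N) := by
    intro N
    exact Measurable.iInf fun j => (hgmeas.sub (hfmeas (N + j))).ennreal_ofReal
  have hχlt : ∀ N x, χ N x < ⊤ := by
    intro N x
    exact lt_of_le_of_lt (iInf_le _ 0) ENNReal.ofReal_lt_top
  have hχmono : Monotone χ := by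
    intro N M hNM
    intro x
    refine le_iInf fun j => iInf_le_of_le (M - N + j) ?_
    have : N + (M - N + j) = M + j := by omega
    rw [this]
  set ψ : ℕ → ℕ → E → ENNReal := fun N k x => min (χ N x) k with hψdef
  have hψmeas : ∀ N k, Measurable (ψ N k) := fun N k => (hχmeas N).min measurable_const
  have hψle : ∀ N k x, ψ N k x ≤ k := fun N k x => min_le_right _ _
  -- pointwise: sup over N of χ N dominates ofReal (-(flim x))
  have hχsup : ∀ x, ENNReal.ofReal (-(flim x)) ≤ ⨆ N, χ N x := by
    intro x
    have htends : Tendsto (fun m => ENNReal.ofReal (g x - f m x)) atTop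
        (nhds (ENNReal.ofReal (g x - flim x))) :=
      (ENNReal.continuous_ofReal.tendsto _).comp (tendsto_const_nhds.sub (hlim x))
    have hliminf : liminf (fun m => ENNReal.ofReal (g x - f m x)) atTop
        = ENNReal.ofReal (g x - flim x) := htends.liminf_eq
    have hrep : liminf (fun m => ENNReal.ofReal (g x - f m x)) atTop
        = ⨆ N, ⨅ j, ENNReal.ofReal (g x - f (j + N) x) :=
      liminf_eq_iSup_iInf_of_nat'
    have h1 : ENNReal.ofReal (-(flim x)) ≤ ENNReal.ofReal (g x - flim x) :=
      ENNReal.ofReal_le_ofReal (by linarith [hgnn x])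
    refine h1.trans ?_
    rw [← hliminf, hrep]
    refine iSup_mono fun N => le_iInf fun j => iInf_le_of_le j ?_
    rw [add_comm j N]
  -- the sup of the integrals of ψ is ⊤
  have hsuptop : (⨆ N, ⨆ k, ∫⁻ x, ψ N k x ∂ν) = ⊤ := by
    have step1 : ∀ N, (⨆ k, ∫⁻ x, ψ N k x ∂ν) = ∫⁻ x, χ N x ∂ν := by
      intro N
      rw [← lintegral_iSup (fun k => hψmeas N k)
        (fun k l hkl x => min_le_min le_rfl (by exact_mod_cast Nat.cast_le.2 hkl))]
      congr 1
      funext x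
      refine le_antisymm (iSup_le fun k => min_le_left _ _) ?_
      obtain ⟨n, hn⟩ := ENNReal.exists_nat_gt (hχlt N x).ne
      exact le_trans (le_of_eq (min_eq_left hn.le).symm) (le_iSup (fun k : ℕ => min (χ N x) (k:ENNReal)) n)
    have step2 : (⨆ N, ∫⁻ x, χ N x ∂ν) = ∫⁻ x, ⨆ N, χ N x ∂ν :=
      (lintegral_iSup hχmeas hχmono).symm
    have step3 : (∫⁻ x, ⨆ N, χ N x ∂ν) = ⊤ := by
      refine top_unique ?_
      rw [← hneg]
      exact lintegral_mono hχsup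
    simp only [step1, step2, step3]
  -- finite integral of A
  have hI_ne_top : (∫⁻ x, A x ∂ν) ≠ ⊤ := by
    have hle : ∀ x, A x ≤ ‖g x‖₊ := by
      intro x
      rw [hAdef]
      simp only
      rw [show ((‖g x‖₊ : NNReal) : ENNReal) = ENNReal.ofReal ‖g x‖ from (ENNReal.ofReal_eq_coe_nnreal (norm_nonneg _)).symm]
      exact ENNReal.ofReal_le_ofReal (le_abs_self _)
    exact ((lintegral_mono hle).trans_lt hgint.2).ne
  have hψ_int_ne_top : ∀ N k, (∫⁻ x, ψ N k x ∂ν) ≠ ⊤ := by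
    intro N k
    refine ((lintegral_mono (hψle N k)).trans_lt ?_).ne
    simp [lintegral_const]
  -- almost sure events
  have hAae := hX A hAmeas
  have hψae : ∀ᵐ ω ∂P, ∀ N k, Tendsto
      (fun m => (∑ j ∈ Finset.range m, ψ N k (X j ω)) / (m : ENNReal))
      atTop (nhds (∫⁻ x, ψ N k x ∂ν)) := by
    rw [ae_all_iff]
    intro N
    rw [ae_all_iff]
    intro k
    exact hX (ψ N k) (hψmeas N k)
  filter_upwards [hAae, hψae] with ω hωA hωψ
  set I : ENNReal := ∫⁻ x, A x ∂ν with hIdef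
  -- real convergence of averages of g
  have hSR : Tendsto (fun m : ℕ => (m : ℝ)⁻¹ * ∑ j ∈ Finset.range m, g (X j ω))
      atTop (nhds I.toReal) := by
    have h0 := (ENNReal.tendsto_toReal hI_ne_top).comp hωA
    refine h0.congr' ?_
    filter_upwards [eventually_ge_atTop 1] with m hm
    have hmpos : (0 : ℝ) < m := by exact_mod_cast hm
    simp only [Function.comp]
    rw [ENNReal.ofReal_sum_of_nonneg (fun j _ => hgnn _) |>.symm]
    rw [show ((m : ℕ) : ENNReal) = ENNReal.ofReal (m : ℝ) by simp]
    rw [← ENNReal.ofReal_div_of_pos hmpos]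
    rw [ENNReal.toReal_ofReal (div_nonneg (Finset.sum_nonneg fun j _ => hgnn _) hmpos.le)]
    rw [div_eq_inv_mul]
  rw [tendsto_atBot]
  intro b
  have hex : ∃ N k, ENNReal.ofReal (I.toReal - b + 1) < ∫⁻ x, ψ N k x ∂ν := by
    by_contra h
    push_neg at h
    have hle2 : (⨆ N, ⨆ k, ∫⁻ x, ψ N k x ∂ν) ≤ ENNReal.ofReal (I.toReal - b + 1) :=
      iSup_le fun N => iSup_le fun k => h N k
    rw [hsuptop] at hle2
    exact ENNReal.ofReal_ne_top (top_le_iff.mp hle2)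
  obtain ⟨N, k, hNk⟩ := hex
  set L : ENNReal := ∫⁻ x, ψ N k x ∂ν with hLdef
  have hLne : L ≠ ⊤ := hψ_int_ne_top N k
  have hLtoReal : I.toReal - b + 1 ≤ L.toReal := by
    rcases le_or_gt (I.toReal - b + 1) 0 with h|h
    · exact h.trans ENNReal.toReal_nonneg
    · exact ((ENNReal.ofReal_lt_iff_lt_toReal h.le hLne).mp hNk).le
  have hTR : Tendsto (fun m : ℕ => (m : ℝ)⁻¹ * ∑ j ∈ Finset.range m, (ψ N k (X j ω)).toReal)
      atTop (nhds L.toReal) := by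
    have h0 := (ENNReal.tendsto_toReal hLne).comp (hωψ N k)
    refine h0.congr' ?_
    filter_upwards [eventually_ge_atTop 1] with m hm
    simp only [Function.comp]
    have hfin : ∀ j ∈ Finset.range m, ψ N k (X j ω) ≠ ⊤ := by
      intro j _
      exact ((hψle N k _).trans_lt (ENNReal.natCast_lt_top k)).ne
    rw [ENNReal.toReal_div, ENNReal.toReal_sum hfin]
    simp [div_eq_inv_mul]
  have hsub : Tendsto (fun m : ℕ => (m : ℝ)⁻¹ * ∑ j ∈ Finset.range m, g (X j ω)
      - (m : ℝ)⁻¹ * ∑ j ∈ Finset.range m, (ψ N k (X j ω)).toReal) atTop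
      (nhds (I.toReal - L.toReal)) := hSR.sub hTR
  have hlt : I.toReal - L.toReal < b := by linarith
  have hev1 := hsub.eventually_lt_const hlt
  filter_upwards [hev1, eventually_ge_atTop N, eventually_ge_atTop 1] with m h1 h2 h3
  have hpt : ∀ j, f m (X j ω) ≤ g (X j ω) - (ψ N k (X j ω)).toReal := by
    intro j
    set x := X j ω with hxdef
    have h4 : ψ N k x ≤ ENNReal.ofReal (g x - f m x) := by
      refine (min_le_left _ _).trans (iInf_le_of_le (m - N) ?_)
      rw [show N + (m - N) = m from by omega]
    have h5 := ENNReal.toReal_mono ENNReal.ofReal_ne_top h4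
    rw [ENNReal.toReal_ofReal (by linarith [hdom m x])] at h5
    linarith
  calc (m:ℝ)⁻¹ * ∑ j ∈ Finset.range m, f m (X j ω)
      ≤ (m:ℝ)⁻¹ * ∑ j ∈ Finset.range m, (g (X j ω) - (ψ N k (X j ω)).toReal) :=
        mul_le_mul_of_nonneg_left (Finset.sum_le_sum fun j _ => hpt j) (by positivity)
    _ = (m : ℝ)⁻¹ * ∑ j ∈ Finset.range m, g (X j ω)
        - (m : ℝ)⁻¹ * ∑ j ∈ Finset.range m, (ψ N k (X j ω)).toReal := by
        rw [Finset.sum_sub_distrib, mul_sub]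
    _ ≤ b := h1.le
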